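/- For any M-monadic proper expression E over Σ, any symbol a ∈ Σ, and any word w ∈ Σ*, the weight of aw in E equals the bind of the derivative of E by a with the weight function: weight_{aw}(E) = d_a(E) >>= weight_w. -/

import Mathlib

/-- `M`-monadic expressions over an alphabet `A`, where `K = M(𝟙)`. -/
inductive MExp (A K : Type) : Type
  | sym : A → MExp A K
  | eps : MExp A K
  | empty : MExp A K
  | plus : MExp A K → MExp A K → MExp A K
  | times : MExp A K → MExp A K → MExp A K
  | star : MExp A K → MExp A K
  | lact : K → MExp A K → MExp A K
  | ract : MExp A K → K → MExp A K
  | fn : (n : ℕ) → ((Fin n → K) → K) → (Fin n → MExp A K) → MExp A K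

variable {A K : Type}

/-- The nullability value (for star, `1`, valid on proper expressions). -/
def MExp.null [Semiring K] : MExp A K → K
  | .sym _ => 0
  | .eps => 1
  | .empty => 0
  | .plus e₁ e₂ => e₁.null + e₂.null
  | .times e₁ e₂ => e₁.null * e₂.null
  | .star _ => 1
  | .lact k e => k * e.null
  | .ract e k => e.null * k
  | .fn _ f es => f (fun i => (es i).null)

/-- Properness: every starred subexpression has a null nullability value. -/
def MExp.IsProper [Semiring K] : MExp A K → Prop
  | .sym _ | .eps | .empty => True
  | .plus e₁ e₂ | .times e₁ e₂ => e₁.IsProper ∧ e₂.IsProper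
  | .star e => e.IsProper ∧ e.null = 0
  | .lact _ e | .ract e _ => e.IsProper
  | .fn _ _ es => ∀ i, (es i).IsProper

/-- Cauchy product of series. -/
def cauchy [Semiring K] (S₁ S₂ : List A → K) : List A → K :=
  fun w => ∑ i ∈ Finset.range (w.length + 1), S₁ (w.take i) * S₂ (w.drop i)

/-- Star of a series: sum over factorizations into nonempty factors. -/
def starSeries [Semiring K] (S : List A → K) : List A → K
  | [] => 1
  | w => ∑ c : Composition w.length, ((w.splitWrtComposition c).map S).prod

/-- The series associated with an expression. -/
def MExp.series [Semiring K] [DecidableEq A] : MExp A K → List A → K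
  | .sym a, w => if w = [a] then 1 else 0
  | .eps, w => if w = [] then 1 else 0
  | .empty, _ => 0
  | .plus e₁ e₂, w => e₁.series w + e₂.series w
  | .times e₁ e₂, w => cauchy e₁.series e₂.series w
  | .star e, w => starSeries e.series w
  | .lact k e, w => k * e.series w
  | .ract e k, w => e.series w * k
  | .fn _ f es, w => f (fun i => (es i).series w)

/-- The weight associated with a word `w` by an expression `E`: `weight_w(E) = S(E)(w)`. -/
def MExp.weight [Semiring K] [DecidableEq A] (w : List A) (E : MExp A K) : K := E.series w

/-- An expressive support for a monad `M`: a monoid `(M(Exp(Σ)), ±, 0̲)`, a right action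
`⋉` of expressions, left and right actions `▷`, `◁` of `M(𝟙)`, an operad-module action
`⋇` of functions over `M(𝟙)`, and a function `toExp` compatible with all operations
(where two expressions denoting the same series are identified). -/
structure ExpressiveSupport (M : Type → Type) (A : Type) [Monad M]
    [Semiring (M PUnit)] [DecidableEq A] where
  pm : M (MExp A (M PUnit)) → M (MExp A (M PUnit)) → M (MExp A (M PUnit))
  zero : M (MExp A (M PUnit))
  ltimes : M (MExp A (M PUnit)) → MExp A (M PUnit) → M (MExp A (M PUnit))
  lactM : M PUnit → M (MExp A (M PUnit)) → M (MExp A (M PUnit))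
  ractM : M (MExp A (M PUnit)) → M PUnit → M (MExp A (M PUnit))
  fapp : (n : ℕ) → ((Fin n → M PUnit) → M PUnit) →
    (Fin n → M (MExp A (M PUnit))) → M (MExp A (M PUnit))
  toExp : M (MExp A (M PUnit)) → MExp A (M PUnit)
  /-- monoid laws for `±` with unit `0̲` -/
  pm_assoc : ∀ m₁ m₂ m₃, pm (pm m₁ m₂) m₃ = pm m₁ (pm m₂ m₃)
  pm_zero : ∀ m, pm m zero = m
  zero_pm : ∀ m, pm zero m = m
  /-- `weight_w(toExp(m)) = m >>= weight_w` -/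
  weight_toExp : ∀ (w : List A) m, (toExp m).weight w = m >>= MExp.weight w
  /-- `toExp(m ⋉ F) = toExp(m) · F` -/
  toExp_ltimes : ∀ m F w, (toExp (ltimes m F)).series w = ((toExp m).times F).series w
  /-- `toExp(m ± m') = toExp(m) + toExp(m')` -/
  toExp_pm : ∀ m m' w, (toExp (pm m m')).series w = ((toExp m).plus (toExp m')).series w
  /-- `toExp(α ▷ m) = α ⊙ toExp(m)` -/
  toExp_lact : ∀ α m w, (toExp (lactM α m)).series w = (MExp.lact α (toExp m)).series w
  /-- `toExp(m ◁ α) = toExp(m) ⊙ α` -/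
  toExp_ract : ∀ m α w, (toExp (ractM m α)).series w = (MExp.ract (toExp m) α).series w
  /-- `toExp(f ⋇ (m₁,…,mₙ)) = f(toExp(m₁),…,toExp(mₙ))` -/
  toExp_fapp : ∀ n f ms w,
    (toExp (fapp n f ms)).series w = (MExp.fn n f (fun i => toExp (ms i))).series w

variable {M : Type → Type} [Monad M] [Semiring (M PUnit)] [DecidableEq A]

/-- The monadic derivative of an expression w.r.t. a symbol. -/
def mderiv (sup : ExpressiveSupport M A) (a : A) :
    MExp A (M PUnit) → M (MExp A (M PUnit))
  | .sym b => if a = b then pure MExp.eps else sup.zero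
  | .eps => sup.zero
  | .empty => sup.zero
  | .plus e₁ e₂ => sup.pm (mderiv sup a e₁) (mderiv sup a e₂)
  | .times e₁ e₂ =>
      sup.pm (sup.ltimes (mderiv sup a e₁) e₂) (sup.lactM e₁.null (mderiv sup a e₂))
  | .star e => sup.ltimes (mderiv sup a e) (MExp.star e)
  | .lact α e => sup.lactM α (mderiv sup a e)
  | .ract e α => sup.ractM (mderiv sup a e) α
  | .fn n f es => sup.fapp n f (fun i => mderiv sup a (es i))



theorem Composition.blocks_ne_nil' {n : ℕ} (c : Composition (n + 1)) : c.blocks ≠ [] := by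
  intro h
  have := c.blocks_sum
  simp [h] at this

theorem sigma_comp_ext {n : ℕ} {p q : Σ i : Fin (n + 1), Composition (n - i)}
    (h1 : p.1 = q.1) (h2 : p.2.blocks = q.2.blocks) : p = q := by
  rcases p with ⟨i, c⟩
  rcases q with ⟨j, d⟩
  cases h1
  simp only [Sigma.mk.inj_iff, heq_eq_eq]
  exact ⟨trivial, Composition.ext h2⟩

def compositionConsEquiv (n : ℕ) :
    Composition (n + 1) ≃ Σ i : Fin (n + 1), Composition (n - i) where
  toFun c :=
    have hne : c.blocks ≠ [] := c.blocks_ne_nil'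
    have hmem : c.blocks.head hne ∈ c.blocks := List.head_mem hne
    have hpos : 0 < c.blocks.head hne := c.blocks_pos hmem
    have hsum : c.blocks.head hne + c.blocks.tail.sum = n + 1 := by
      have h := c.blocks_sum
      rw [← List.cons_head_tail hne, List.sum_cons] at h
      exact h
    ⟨⟨c.blocks.head hne - 1, by omega⟩,
      ⟨c.blocks.tail, fun {i} hi => c.blocks_pos (List.mem_of_mem_tail hi), by
        simp only []
        omega⟩⟩
  invFun p :=
    ⟨(p.1 + 1) :: p.2.blocks, by
      intro i hi
      rcases List.mem_cons.mp hi with rfl | hi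
      · omega
      · exact p.2.blocks_pos hi, by
      have h1 := p.2.blocks_sum
      have h2 := p.1.2
      simp only [List.sum_cons]
      omega⟩
  left_inv c := by
    have hne : c.blocks ≠ [] := c.blocks_ne_nil'
    have hpos : 0 < c.blocks.head hne := c.blocks_pos (List.head_mem hne)
    ext1
    simp only
    rw [Nat.sub_add_cancel hpos]
    exact List.cons_head_tail hne
  right_inv p := by
    apply sigma_comp_ext
    · ext
      simp
    · rfl

section SeriesLemmas

variable {A K : Type} [Semiring K] [DecidableEq A]

theorem starSeries_eq_sum (S : List A → K) (u : List A) (m : ℕ) (hm : u.length = m) :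
    starSeries S u = ∑ c : Composition m, ((u.splitWrtComposition c).map S).prod := by
  subst hm
  cases u with
  | nil =>
      have : ∀ c : Composition ([] : List A).length,
          (((@List.nil A).splitWrtComposition c).map S).prod = 1 := by
        intro c
        have hb : c.blocks = [] := by
          have h1 := c.blocks_sum
          simp only [List.length_nil] at h1
          by_contra hne
          have hmem := List.head_mem hne
          have h2 := c.blocks_pos hmem
          have h3 := List.single_le_sum (fun (x : ℕ) _ => Nat.zero_le x) _ hmem
          rw [h1] at h3
          omega
        simp [List.splitWrtComposition, hb, List.splitWrtCompositionAux]
      rw [Finset.sum_congr rfl (fun c _ => this c)]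
      simp [starSeries, composition_card]
  | cons a l => rfl

theorem starSeries_cons (S : List A → K) (a : A) (w : List A) :
    starSeries S (a :: w) =
      ∑ i ∈ Finset.range (w.length + 1), S (a :: w.take i) * starSeries S (w.drop i) := by
  set n := w.length with hn
  have h0 : starSeries S (a :: w) =
      ∑ c : Composition (n + 1), (((a :: w).splitWrtComposition c).map S).prod :=
    starSeries_eq_sum S (a :: w) (n + 1) (by simp [hn])
  rw [h0, ← Equiv.sum_comp (compositionConsEquiv n).symm
    (fun c => (((a :: w).splitWrtComposition c).map S).prod), ← Finset.univ_sigma_univ, Finset.sum_sigma]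
  rw [Finset.sum_range fun i => S (a :: w.take i) * starSeries S (w.drop i)]
  refine Finset.sum_congr rfl fun i _ => ?_
  have hterm : ∀ c : Composition (n - (i : ℕ)),
      (((a :: w).splitWrtComposition ((compositionConsEquiv n).symm ⟨i, c⟩)).map S).prod
        = S (a :: w.take (i : ℕ)) * (((w.drop (i : ℕ)).splitWrtComposition c).map S).prod := by
    intro c
    rw [show (a :: w).splitWrtComposition ((compositionConsEquiv n).symm ⟨i, c⟩)
        = List.splitWrtCompositionAux (a :: w) (((i : ℕ) + 1) :: c.blocks) from rfl,
      List.splitWrtCompositionAux_cons]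
    simp only [List.map_cons, List.prod_cons, List.take_succ_cons, List.drop_succ_cons]
    rfl
  rw [Finset.sum_congr rfl fun c _ => hterm c, ← Finset.mul_sum]
  congr 1
  exact (starSeries_eq_sum S (w.drop (i : ℕ)) (n - (i : ℕ)) (by simp [hn])).symm

theorem cauchy_cons (S₁ S₂ : List A → K) (a : A) (w : List A) :
    cauchy S₁ S₂ (a :: w) =
      S₁ [] * S₂ (a :: w) + cauchy (fun u => S₁ (a :: u)) S₂ w := by
  unfold cauchy
  rw [show (a :: w).length + 1 = (w.length + 1) + 1 by simp, Finset.sum_range_succ']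
  simp only [List.take_succ_cons, List.drop_succ_cons, List.take_nil, List.drop_nil,
    List.take_zero, List.drop_zero]
  exact add_comm _ _

theorem MExp.null_eq_series_nil (E : MExp A K) : E.null = E.series [] := by
  induction E with
  | sym b => simp [MExp.null, MExp.series]
  | eps => simp [MExp.null, MExp.series]
  | empty => simp [MExp.null, MExp.series]
  | plus e₁ e₂ ih₁ ih₂ => simp [MExp.null, MExp.series, ih₁, ih₂]
  | times e₁ e₂ ih₁ ih₂ =>
      simp [MExp.null, MExp.series, cauchy, ih₁, ih₂]
  | star e ih => simp [MExp.null, MExp.series, starSeries]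
  | lact k e ih => simp [MExp.null, MExp.series, ih]
  | ract e k ih => simp [MExp.null, MExp.series, ih]
  | fn n f es ih =>
      simp only [MExp.null, MExp.series]
      congr 1
      funext i
      exact ih i

end SeriesLemmas

section MainLemma

variable {A : Type} {M : Type → Type} [Monad M] [Semiring (M PUnit)] [DecidableEq A]

theorem toExp_zero_series [LawfulMonad M] (sup : ExpressiveSupport M A) (w : List A) :
    (sup.toExp sup.zero).series w = 0 := by
  have h := sup.toExp_pm sup.zero (pure MExp.empty) w
  rw [sup.zero_pm] at h
  have h2 : (sup.toExp (pure (MExp.empty : MExp A (M PUnit)))).series w = 0 := by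
    have := sup.weight_toExp w (pure MExp.empty)
    rw [pure_bind] at this
    simpa [MExp.weight, MExp.series] using this
  simp only [MExp.series, h2, add_zero] at h
  exact h.symm

theorem toExp_mderiv_series [LawfulMonad M] (sup : ExpressiveSupport M A) (a : A)
    (E : MExp A (M PUnit)) (w : List A) :
    (sup.toExp (mderiv sup a E)).series w = E.series (a :: w) := by
  induction E generalizing w with
  | sym b =>
      by_cases hab : a = b
      · subst hab
        have hd : mderiv sup a (MExp.sym a) = pure MExp.eps := by simp [mderiv]
        have hw := sup.weight_toExp w (pure (MExp.eps : MExp A (M PUnit)))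
        rw [pure_bind] at hw
        simp only [MExp.weight] at hw
        rw [hd, hw]
        simp [MExp.series, List.cons_eq_cons]
      · have hd : mderiv sup a (MExp.sym b) = sup.zero := by simp [mderiv, hab]
        rw [hd, toExp_zero_series]
        simp [MExp.series, List.cons_eq_cons, hab]
  | eps =>
      simp only [mderiv]
      rw [toExp_zero_series]
      simp [MExp.series]
  | empty =>
      simp only [mderiv]
      rw [toExp_zero_series]
      simp [MExp.series]
  | plus e₁ e₂ ih₁ ih₂ =>
      simp only [mderiv]
      rw [sup.toExp_pm]
      simp only [MExp.series]
      rw [ih₁, ih₂]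
  | times e₁ e₂ ih₁ ih₂ =>
      simp only [mderiv]
      rw [sup.toExp_pm]
      simp only [MExp.series]
      rw [sup.toExp_ltimes, sup.toExp_lact]
      simp only [MExp.series]
      rw [cauchy_cons e₁.series e₂.series a w, MExp.null_eq_series_nil, ih₂]
      rw [add_comm]
      congr 1
      unfold cauchy
      exact Finset.sum_congr rfl fun i _ => by rw [ih₁]
  | star e ih =>
      simp only [mderiv]
      rw [sup.toExp_ltimes]
      simp only [MExp.series]
      rw [starSeries_cons e.series a w]
      unfold cauchy
      exact Finset.sum_congr rfl fun i _ => by rw [ih]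
  | lact k e ih =>
      simp only [mderiv]
      rw [sup.toExp_lact]
      simp only [MExp.series]
      rw [ih]
  | ract e k ih =>
      simp only [mderiv]
      rw [sup.toExp_ract]
      simp only [MExp.series]
      rw [ih]
  | fn n f es ih =>
      simp only [mderiv]
      rw [sup.toExp_fapp]
      simp only [MExp.series]
      congr 1
      funext i
      exact ih i w

end MainLemma

/-- For any proper `M`-monadic expression `E`, symbol `a` and word `w`:
`weight_{aw}(E) = d_a(E) >>= weight_w`. -/
theorem weight_cons_eq_deriv_bind [LawfulMonad M]
    (sup : ExpressiveSupport M A) (E : MExp A (M PUnit)) (hE : E.IsProper)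
    (a : A) (w : List A) :
    E.weight (a :: w) = mderiv sup a E >>= MExp.weight w := by
  rw [← sup.weight_toExp w (mderiv sup a E)]
  simp only [MExp.weight]
  exact (toExp_mderiv_series sup a E w).symm
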